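/- If 𝒳 ⊆ ℝ^d is finite and nonempty and each k_i ≥ 1, then the Battling Influencers Game with finite action space F has at least one pure Nash equilibrium. -/
import Mathlib


open scoped RealInnerProductSpace

noncomputable section

/-- The receiver's point in the Battling Influencers Game with finite action
space: `x̂ = w_0 x_0 + ∑_{i=1}^n w_i ∑_{j=1}^{k_i} x_i^{(j)}`, where player `i`'s
action is the `k_i`-tuple `S i`. -/
def receiverF {d n : ℕ} (k : Fin n → ℕ) (w0 : ℝ) (x0 : EuclideanSpace ℝ (Fin d))
    (w : Fin n → ℝ) (S : (i : Fin n) → Fin (k i) → EuclideanSpace ℝ (Fin d)) :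
    EuclideanSpace ℝ (Fin d) :=
  w0 • x0 + ∑ i, w i • ∑ j, S i j

/-- Player `i`'s loss: `ℓ_i = ‖x̂ − t_i‖₂²`. -/
def lossF {d n : ℕ} (k : Fin n → ℕ) (w0 : ℝ) (x0 : EuclideanSpace ℝ (Fin d))
    (w : Fin n → ℝ) (t : Fin n → EuclideanSpace ℝ (Fin d)) (i : Fin n)
    (S : (i : Fin n) → Fin (k i) → EuclideanSpace ℝ (Fin d)) : ℝ :=
  ‖receiverF k w0 x0 w S - t i‖ ^ 2

/-- Exact potential for the game. -/
def potF {d n : ℕ} (k : Fin n → ℕ) (w0 : ℝ) (x0 : EuclideanSpace ℝ (Fin d))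
    (w : Fin n → ℝ) (t : Fin n → EuclideanSpace ℝ (Fin d))
    (S : (i : Fin n) → Fin (k i) → EuclideanSpace ℝ (Fin d)) : ℝ :=
  ‖receiverF k w0 x0 w S‖ ^ 2 - 2 * ∑ i, ⟪w i • (∑ j, S i j), t i⟫

lemma sum_update_key {d n : ℕ} {β : Type*} [AddCommGroup β] (k : Fin n → ℕ)
    (S : (i : Fin n) → Fin (k i) → EuclideanSpace ℝ (Fin d)) (i : Fin n)
    (S' : Fin (k i) → EuclideanSpace ℝ (Fin d))
    (g : (l : Fin n) → (Fin (k l) → EuclideanSpace ℝ (Fin d)) → β) :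
    ∑ l, g l (Function.update S i S' l) = ∑ l, g l (S l) + (g i S' - g i (S i)) := by
  have h : ∑ l, g l (Function.update S i S' l) - ∑ l, g l (S l)
      = ∑ l, (g l (Function.update S i S' l) - g l (S l)) := by
    rw [Finset.sum_sub_distrib]
  have h2 : ∑ l, (g l (Function.update S i S' l) - g l (S l)) = g i S' - g i (S i) := by
    rw [Finset.sum_eq_single i]
    · rw [Function.update_self]
    · intro b _ hb
      rw [Function.update_of_ne hb, sub_self]
    · intro h; exact absurd (Finset.mem_univ i) h
  rw [h2] at h
  linear_combination (norm := abel) h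

lemma loss_sub_pot {d n : ℕ} (k : Fin n → ℕ) (w0 : ℝ) (x0 : EuclideanSpace ℝ (Fin d))
    (w : Fin n → ℝ) (t : Fin n → EuclideanSpace ℝ (Fin d)) (i : Fin n)
    (S : (i : Fin n) → Fin (k i) → EuclideanSpace ℝ (Fin d))
    (S' : Fin (k i) → EuclideanSpace ℝ (Fin d)) :
    lossF k w0 x0 w t i S - lossF k w0 x0 w t i (Function.update S i S')
      = potF k w0 x0 w t S - potF k w0 x0 w t (Function.update S i S') := by
  have hx : receiverF k w0 x0 w (Function.update S i S')
      = receiverF k w0 x0 w S + (w i • ∑ j, S' j - w i • ∑ j, S i j) := by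
    unfold receiverF
    rw [sum_update_key k S i S' (fun l f => w l • ∑ j, f j)]
    abel
  have hp : ∑ l, ⟪w l • (∑ j, (Function.update S i S') l j), t l⟫
      = ∑ l, ⟪w l • (∑ j, S l j), t l⟫
        + (⟪w i • (∑ j, S' j), t i⟫ - ⟪w i • (∑ j, S i j), t i⟫) :=
    sum_update_key k S i S' (fun l f => ⟪w l • (∑ j, f j), t l⟫)
  have hin : ⟪receiverF k w0 x0 w (Function.update S i S'), t i⟫
      = ⟪receiverF k w0 x0 w S, t i⟫
        + (⟪w i • (∑ j, S' j), t i⟫ - ⟪w i • (∑ j, S i j), t i⟫) := by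
    rw [hx, inner_add_left, inner_sub_left]
  unfold lossF potF
  rw [@norm_sub_sq_real _ _ _ (receiverF k w0 x0 w S),
    @norm_sub_sq_real _ _ _ (receiverF k w0 x0 w (Function.update S i S')), hp, hin]
  ring

/-- If `𝒳 ⊆ ℝ^d` is finite and nonempty and each `k_i ≥ 1`, then the Battling
Influencers Game with finite action space has at least one pure Nash
equilibrium. -/
theorem bigF_exists_pNE {d n : ℕ} (X : Set (EuclideanSpace ℝ (Fin d)))
    (hXfin : X.Finite) (hXne : X.Nonempty) (k : Fin n → ℕ) (hk : ∀ i, 1 ≤ k i)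
    (w0 : ℝ) (x0 : EuclideanSpace ℝ (Fin d)) (w : Fin n → ℝ)
    (t : Fin n → EuclideanSpace ℝ (Fin d)) :
    ∃ S : (i : Fin n) → Fin (k i) → EuclideanSpace ℝ (Fin d),
      (∀ i j, S i j ∈ X) ∧
        ∀ i : Fin n, ∀ S' : Fin (k i) → EuclideanSpace ℝ (Fin d),
          (∀ j, S' j ∈ X) →
            lossF k w0 x0 w t i S ≤ lossF k w0 x0 w t i (Function.update S i S') := by
  haveI : Finite X := hXfin.to_subtype
  obtain ⟨x, hx⟩ := hXne
  haveI : Nonempty ((i : Fin n) → Fin (k i) → X) := ⟨fun _ _ => ⟨x, hx⟩⟩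
  obtain ⟨T, hT⟩ := Finite.exists_min
    (fun T : (i : Fin n) → Fin (k i) → X =>
      potF k w0 x0 w t (fun i j => (T i j : EuclideanSpace ℝ (Fin d))))
  refine ⟨fun i j => (T i j : EuclideanSpace ℝ (Fin d)), fun i j => (T i j).2, ?_⟩
  intro i S' hS'
  have hpot : potF k w0 x0 w t (fun i j => (T i j : EuclideanSpace ℝ (Fin d)))
      ≤ potF k w0 x0 w t (Function.update (fun i j => (T i j : EuclideanSpace ℝ (Fin d))) i S') := by
    have hupd : Function.update (fun i j => (T i j : EuclideanSpace ℝ (Fin d))) i S'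
        = fun l j => ((Function.update T i (fun j => (⟨S' j, hS' j⟩ : X)) l j :
            EuclideanSpace ℝ (Fin d))) := by
      funext l j
      by_cases h : l = i
      · subst h; simp
      · rw [Function.update_of_ne h, Function.update_of_ne h]
    rw [hupd]
    exact hT _
  have := loss_sub_pot k w0 x0 w t i (fun i j => (T i j : EuclideanSpace ℝ (Fin d))) S'
  linarith

end
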